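/- Let $W$ be a fixed $(t-1)$-dimensional subspace of $\mathbb{F}_q^k$, and let $m, t$ be positive integers with $m + t \le k$. The number of unordered $(m+1)$-element sets $\{V_1, \dots, V_{m+1}\}$ of $t$-dimensional subspaces, each containing $W$, such that $\sum_{i=1}^{m+1} V_i$ is an $(m+t)$-dimensional subspace, equals $\binom{k-t+1}{m+1}_q \cdot \frac{\prod_{i=0}^{m}(q^{m+1} - q^i)}{(m+1)!\,(q-1)^{m+1}}$. -/

import Mathlib

open Module Submodule Finset


lemma nat_card_eq_mul_of_fiber {α β : Type*} [Finite α] [Finite β] (f : α → β) {c : ℕ}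
    (h : ∀ b : β, Nat.card {a // f a = b} = c) :
    Nat.card α = Nat.card β * c := by
  classical
  cases nonempty_fintype α
  cases nonempty_fintype β
  rw [Nat.card_eq_fintype_card, Nat.card_eq_fintype_card,
    ← Fintype.card_congr (Equiv.sigmaFiberEquiv f), Fintype.card_sigma]
  have h' : ∀ b : β, Fintype.card {a // f a = b} = c := fun b => by
    rw [← Nat.card_eq_fintype_card]; exact h b
  simp [h']

instance submoduleFinite {F V : Type*} [Field F] [AddCommGroup V] [Module F V] [Finite V] :
    Finite (Submodule F V) := Finite.of_injective _ SetLike.coe_injective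

lemma mapFinsetSupAux {F V W : Type*} [Field F] [AddCommGroup V] [Module F V]
    [AddCommGroup W] [Module F W] (f : V →ₗ[F] W) (s : Finset (Submodule F V)) :
    Submodule.map f (s.sup id) = s.sup (Submodule.map f) := by
  have := Finset.comp_sup_eq_sup_comp (s := s) (f := (id : Submodule F V → Submodule F V))
    (Submodule.map f) (fun p q => Submodule.map_sup p q f) (Submodule.map_bot f)
  simpa using this

section
variable {F V : Type*} [Field F] [Fintype F] [AddCommGroup V] [Module F V] [Finite V]

lemma card_ne_zero_of_rank_one (L : Submodule F V) (hL : Module.finrank F L = 1) :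
    Nat.card {x : L // x ≠ 0} = Fintype.card F - 1 := by
  classical
  cases nonempty_fintype L
  rw [Nat.card_eq_fintype_card]
  have h1 : Fintype.card L = Fintype.card F := by
    rw [card_eq_pow_finrank (K := F) (V := L), hL, pow_one]
  have := Fintype.card_subtype_compl (fun x : L => x = 0)
  simp only [Fintype.card_subtype_eq] at this
  rw [this, h1]

lemma card_not_mem_submodule (S : Submodule F V) :
    Nat.card {x : V // x ∉ S} = Fintype.card F ^ finrank F V - Fintype.card F ^ finrank F S := by
  classical
  cases nonempty_fintype V
  rw [Nat.card_eq_fintype_card]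
  have h1 : Fintype.card V = Fintype.card F ^ finrank F V := card_eq_pow_finrank
  have h2 : Fintype.card {x : V // x ∈ S} = Fintype.card F ^ finrank F S := by
    rw [Fintype.card_congr (Equiv.refl _ : {x : V // x ∈ S} ≃ S)]
    exact card_eq_pow_finrank
  have := Fintype.card_subtype_compl (fun x : V => x ∈ S)
  rw [this, h1, h2]

lemma card_indep_tuples (d : ℕ) :
    Nat.card {v : Fin d → V // LinearIndependent F v} =
      ∏ i ∈ Finset.range d, (Fintype.card F ^ finrank F V - Fintype.card F ^ i) := by
  classical
  have : FiniteDimensional F V := Module.finite_iff_finite.mpr inferInstance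
  induction d with
  | zero =>
      rw [Finset.prod_range_zero]
      have : ∀ v : Fin 0 → V, LinearIndependent F v := fun v =>
        linearIndependent_empty_type
      rw [Nat.card_congr (Equiv.subtypeUnivEquiv this)]
      simp [Nat.card_eq_fintype_card]
  | succ d ih =>
      rw [Finset.prod_range_succ, ← ih]
      set f : {v : Fin (d+1) → V // LinearIndependent F v} →
          {v : Fin d → V // LinearIndependent F v} :=
        fun v => ⟨Fin.init v.1, by
          have := v.2
          rw [← Fin.snoc_init_self v.1] at this
          exact (linearIndependent_fin_snoc.1 this).1⟩ with hf
      apply nat_card_eq_mul_of_fiber f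
      intro w
      have e : {a // f a = w} ≃ {x : V // x ∉ Submodule.span F (Set.range w.1)} := by
        refine ⟨fun a => ⟨a.1.1 (Fin.last d), ?_⟩,
          fun x => ⟨⟨Fin.snoc w.1 x.1, linearIndependent_fin_snoc.2 ⟨w.2, x.2⟩⟩,
            by apply Subtype.ext; simp only [hf]; exact Fin.init_snoc _ _⟩, ?_, ?_⟩
        · have h2 := a.2
          have := a.1.2
          rw [← Fin.snoc_init_self a.1.1] at this
          have h3 := (linearIndependent_fin_snoc.1 this).2
          have : Fin.init a.1.1 = w.1 := congrArg Subtype.val h2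
          rwa [this] at h3
        · rintro ⟨⟨a, ha⟩, hfa⟩
          apply Subtype.ext; apply Subtype.ext
          simp only
          have : Fin.init a = w.1 := congrArg Subtype.val hfa
          rw [← this]
          exact Fin.snoc_init_self a
        · rintro ⟨x, hx⟩
          apply Subtype.ext
          simp [Fin.snoc_last]
      rw [Nat.card_congr e, card_not_mem_submodule]
      congr 2
      rw [finrank_span_eq_card w.2, Fintype.card_fin]

lemma card_indep_eq_ordered (d : ℕ) :
    Nat.card {v : Fin d → V // LinearIndependent F v} =
      Nat.card {L : Fin d → Submodule F V //
        (∀ i, finrank F (L i) = 1) ∧ finrank F ↥(⨆ i, L i) = d} * (Fintype.card F - 1) ^ d := by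
  classical
  have hFD : FiniteDimensional F V := Module.finite_iff_finite.mpr inferInstance
  set f : {v : Fin d → V // LinearIndependent F v} → {L : Fin d → Submodule F V //
      (∀ i, finrank F (L i) = 1) ∧ finrank F ↥(⨆ i, L i) = d} :=
    fun v => ⟨fun i => F ∙ v.1 i, fun i => finrank_span_singleton (v.2.ne_zero i), by
      rw [← span_range_eq_iSup, finrank_span_eq_card v.2, Fintype.card_fin]⟩ with hf
  apply nat_card_eq_mul_of_fiber f
  intro L
  have e : {a // f a = L} ≃ ∀ i, {x : L.1 i // x ≠ 0} := by
    refine ⟨fun a i => ⟨⟨a.1.1 i, ?_⟩, ?_⟩, fun x => ⟨⟨fun i => ((x i).1 : V), ?_⟩, ?_⟩, ?_, ?_⟩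
    · have hL : (fun i => F ∙ a.1.1 i) = L.1 := congrArg Subtype.val a.2
      rw [← congrFun hL i]
      exact mem_span_singleton_self _
    · intro h
      exact a.1.2.ne_zero i (by simpa using congrArg Subtype.val h)
    · -- linear independence
      have hne : ∀ i, ((x i).1 : V) ≠ 0 := fun i => by
        intro h; exact (x i).2 (Subtype.ext h)
      have hspan : ∀ i, (F ∙ ((x i).1 : V)) = L.1 i := fun i => by
        apply Submodule.eq_of_le_of_finrank_le
          ((span_singleton_le_iff_mem _ _).2 (x i).1.2)
        rw [finrank_span_singleton (hne i), L.2.1 i]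
      rw [linearIndependent_iff_card_eq_finrank_span, Fintype.card_fin, Set.finrank,
        span_range_eq_iSup]
      have : (⨆ i, F ∙ ((x i).1 : V)) = ⨆ i, L.1 i := by
        congr 1; funext i; exact hspan i
      rw [this, L.2.2]
    · -- fiber condition
      apply Subtype.ext
      funext i
      have hne : ((x i).1 : V) ≠ 0 := fun h => (x i).2 (Subtype.ext h)
      apply Submodule.eq_of_le_of_finrank_le
        ((span_singleton_le_iff_mem _ _).2 (x i).1.2)
      rw [finrank_span_singleton hne, L.2.1 i]
    · rintro ⟨⟨a, ha⟩, hfa⟩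
      apply Subtype.ext; apply Subtype.ext; rfl
    · intro x
      funext i
      apply Subtype.ext; apply Subtype.ext; rfl
  rw [Nat.card_congr e, Nat.card_pi]
  have : ∀ i, Nat.card {x : L.1 i // x ≠ 0} = Fintype.card F - 1 := fun i =>
    card_ne_zero_of_rank_one (L.1 i) (L.2.1 i)
  simp [this]

lemma finrank_finset_sup_le (s : Finset (Submodule F V)) :
    finrank F ↥(s.sup id) ≤ ∑ U ∈ s, finrank F ↥U := by
  classical
  have hFD : FiniteDimensional F V := Module.finite_iff_finite.mpr inferInstance
  induction s using Finset.induction_on with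
  | empty => simp
  | @insert a s' ha ih =>
      rw [Finset.sup_insert, Finset.sum_insert ha]
      calc finrank F ↥(id a ⊔ s'.sup id) ≤ finrank F ↥a + finrank F ↥(s'.sup id) :=
            Submodule.finrank_add_le_finrank_add_finrank _ _
        _ ≤ finrank F ↥a + ∑ U ∈ s', finrank F ↥U := by omega

lemma ordered_line_injective [DecidableEq (Submodule F V)] {d : ℕ}
    (L : Fin d → Submodule F V) (h1 : ∀ i, finrank F (L i) = 1)
    (h2 : finrank F ↥(⨆ i, L i) = d) :
    Function.Injective L ∧ (Finset.univ.image L).card = d := by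
  classical
  set s := Finset.univ.image L with hs
  have hsup : s.sup id = ⨆ i, L i := by
    rw [hs, Finset.sup_image, Function.id_comp, sup_univ_eq_iSup]
  have hle : d ≤ s.card := by
    have h3 := finrank_finset_sup_le (F := F) (V := V) s
    rw [hsup, h2] at h3
    refine le_trans h3 ?_
    have h4 : ∀ U ∈ s, finrank F ↥U = 1 := by
      intro U hU
      obtain ⟨i, _, rfl⟩ := Finset.mem_image.1 hU
      exact h1 i
    rw [Finset.sum_congr rfl h4, Finset.sum_const, smul_eq_mul, mul_one]
  have hge : s.card ≤ d := le_trans Finset.card_image_le (by simp)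
  have hcard : s.card = d := le_antisymm hge hle
  have hinj : Set.InjOn L (Finset.univ : Finset (Fin d)) := by
    rw [← Finset.card_image_iff, ← hs, hcard, Finset.card_univ, Fintype.card_fin]
  exact ⟨fun a b hab => hinj (by simp) (by simp) hab, hcard⟩

lemma card_ordered_eq_sets (d : ℕ) :
    Nat.card {L : Fin d → Submodule F V //
        (∀ i, finrank F (L i) = 1) ∧ finrank F ↥(⨆ i, L i) = d} =
      Nat.card {s : Finset (Submodule F V) //
        s.card = d ∧ (∀ U ∈ s, finrank F ↥U = 1) ∧ finrank F ↥(s.sup id) = d} * d.factorial := by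
  classical
  cases nonempty_fintype (Submodule F V)
  set g : {L : Fin d → Submodule F V //
      (∀ i, finrank F (L i) = 1) ∧ finrank F ↥(⨆ i, L i) = d} →
      {s : Finset (Submodule F V) //
        s.card = d ∧ (∀ U ∈ s, finrank F ↥U = 1) ∧ finrank F ↥(s.sup id) = d} :=
    fun L => ⟨Finset.univ.image L.1,
      (ordered_line_injective L.1 L.2.1 L.2.2).2,
      fun U hU => by obtain ⟨i, _, rfl⟩ := Finset.mem_image.1 hU; exact L.2.1 i,
      by rw [Finset.sup_image, Function.id_comp, sup_univ_eq_iSup]; exact L.2.2⟩ with hg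
  apply nat_card_eq_mul_of_fiber g
  intro s
  have himg : ∀ (e : Fin d ≃ {x // x ∈ s.1}),
      Finset.univ.image (fun i => ((e i : {x // x ∈ s.1}) : Submodule F V)) = s.1 := by
    intro e
    ext U
    simp only [Finset.mem_image, Finset.mem_univ, true_and]
    constructor
    · rintro ⟨i, rfl⟩; exact (e i).2
    · intro hU; exact ⟨e.symm ⟨U, hU⟩, by simp⟩
  have hsup : ∀ (e : Fin d ≃ {x // x ∈ s.1}),
      finrank F ↥(⨆ i, ((e i : {x // x ∈ s.1}) : Submodule F V)) = d := by
    intro e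
    have : (⨆ i, ((e i : {x // x ∈ s.1}) : Submodule F V)) = s.1.sup id := by
      rw [← sup_univ_eq_iSup]
      conv_rhs => rw [← himg e]
      rw [Finset.sup_image, Function.id_comp]
    rw [this]; exact s.2.2.2
  have e : {a // g a = s} ≃ (Fin d ≃ {x // x ∈ s.1}) := by
    refine ⟨fun a => Equiv.ofBijective
        (fun i => (⟨a.1.1 i, by
          rw [← congrArg Subtype.val a.2]; exact Finset.mem_image_of_mem _ (Finset.mem_univ i)⟩ :
          {x // x ∈ s.1})) ?_,
      fun e => ⟨⟨fun i => (e i).1, fun i => s.2.2.1 _ (e i).2, hsup e⟩,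
        Subtype.ext (himg e)⟩, ?_, ?_⟩
    · refine (Fintype.bijective_iff_injective_and_card _).2 ⟨?_, ?_⟩
      · intro i j hij
        exact (ordered_line_injective a.1.1 a.1.2.1 a.1.2.2).1 (by
          simpa using congrArg Subtype.val hij)
      · rw [Fintype.card_fin, Fintype.card_coe, s.2.1]
    · rintro ⟨L, hL⟩
      apply Subtype.ext; apply Subtype.ext; funext i; rfl
    · intro e
      apply Equiv.ext; intro i; apply Subtype.ext; rfl
  rw [Nat.card_congr e, Nat.card_eq_fintype_card, Fintype.card_equiv
    ((Finset.equivFinOfCardEq s.2.1).symm), Fintype.card_fin]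

lemma card_lineSets_fiber (d : ℕ) (c : ℕ)
    (hc : ∀ (U : Submodule F V), finrank F ↥U = d →
      Nat.card {s : Finset (Submodule F ↥U) //
        s.card = d ∧ (∀ X ∈ s, finrank F ↥X = 1) ∧ finrank F ↥(s.sup id) = d} = c) :
    Nat.card {s : Finset (Submodule F V) //
        s.card = d ∧ (∀ X ∈ s, finrank F ↥X = 1) ∧ finrank F ↥(s.sup id) = d} =
      Nat.card {U : Submodule F V // finrank F ↥U = d} * c := by
  classical
  cases nonempty_fintype (Submodule F V)
  have hFD : FiniteDimensional F V := Module.finite_iff_finite.mpr inferInstance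
  apply nat_card_eq_mul_of_fiber
    (fun s : {s : Finset (Submodule F V) //
        s.card = d ∧ (∀ X ∈ s, finrank F ↥X = 1) ∧ finrank F ↥(s.sup id) = d} =>
      (⟨s.1.sup id, s.2.2.2⟩ : {U : Submodule F V // finrank F ↥U = d}))
  intro U
  rw [← hc U.1 U.2]
  apply Nat.card_congr
  refine ⟨fun a => ⟨a.1.1.image (Submodule.comap U.1.subtype), ?_⟩,
    fun s' => ⟨⟨s'.1.image (Submodule.map U.1.subtype), ?_⟩, ?_⟩, ?_, ?_⟩
  · -- forward conditions
    have hU : a.1.1.sup id = U.1 := congrArg Subtype.val a.2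
    have hle : ∀ X ∈ a.1.1, X ≤ U.1 := fun X hX => hU ▸ Finset.le_sup (f := id) hX
    have hmc : ∀ X ∈ a.1.1, Submodule.map U.1.subtype (Submodule.comap U.1.subtype X) = X :=
      fun X hX => by rw [Submodule.map_comap_subtype]; exact inf_eq_right.2 (hle X hX)
    have hinj : Set.InjOn (Submodule.comap U.1.subtype) a.1.1 := by
      intro X hX Y hY h
      rw [← hmc X hX, ← hmc Y hY, h]
    refine ⟨?_, ?_, ?_⟩
    · rw [Finset.card_image_of_injOn hinj, a.1.2.1]
    · intro Y hY
      obtain ⟨X, hX, rfl⟩ := Finset.mem_image.1 hY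
      rw [(Submodule.comapSubtypeEquivOfLe (hle X hX)).finrank_eq]
      exact a.1.2.2.1 X hX
    · have h1 : Submodule.map U.1.subtype ((a.1.1.image (Submodule.comap U.1.subtype)).sup id)
          = U.1 := by
        rw [mapFinsetSupAux, Finset.sup_image]
        have : ∀ X ∈ a.1.1,
            (Submodule.map U.1.subtype ∘ Submodule.comap U.1.subtype) X = id X := hmc
        rw [Finset.sup_congr rfl this, hU]
      have h2 : (a.1.1.image (Submodule.comap U.1.subtype)).sup id = ⊤ := by
        apply Submodule.map_injective_of_injective (Submodule.injective_subtype U.1)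
        rw [h1, Submodule.map_subtype_top]
      rw [h2, finrank_top]
      exact U.2
  · -- inverse conditions
    have hFDU : FiniteDimensional F ↥U.1 := inferInstance
    have hsup' : s'.1.sup id = ⊤ :=
      Submodule.eq_top_of_finrank_eq (by rw [s'.2.2.2]; exact U.2.symm)
    have hs : (s'.1.image (Submodule.map U.1.subtype)).sup id = U.1 := by
      rw [Finset.sup_image]
      simp only [Function.id_comp]
      rw [← mapFinsetSupAux, hsup', Submodule.map_subtype_top]
    refine ⟨?_, ?_, ?_⟩
    · rw [Finset.card_image_of_injective _
        (Submodule.map_injective_of_injective (Submodule.injective_subtype U.1)), s'.2.1]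
    · intro Y hY
      obtain ⟨X, hX, rfl⟩ := Finset.mem_image.1 hY
      rw [← (Submodule.equivMapOfInjective U.1.subtype
        (Submodule.injective_subtype U.1) X).finrank_eq]
      exact s'.2.2.1 X hX
    · rw [hs]; exact U.2
  · -- fiber condition
    apply Subtype.ext
    show (s'.1.image (Submodule.map U.1.subtype)).sup id = U.1
    have hsup' : s'.1.sup id = ⊤ :=
      Submodule.eq_top_of_finrank_eq (by rw [s'.2.2.2]; exact U.2.symm)
    rw [Finset.sup_image]
    simp only [Function.id_comp]
    rw [← mapFinsetSupAux, hsup', Submodule.map_subtype_top]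
  · -- left inverse
    rintro ⟨⟨s, hs⟩, ha⟩
    have hU : s.sup id = U.1 := congrArg Subtype.val ha
    have hle : ∀ X ∈ s, X ≤ U.1 := fun X hX => hU ▸ Finset.le_sup (f := id) hX
    apply Subtype.ext; apply Subtype.ext
    show (s.image (Submodule.comap U.1.subtype)).image (Submodule.map U.1.subtype) = s
    rw [Finset.image_image]
    rw [Finset.image_congr (g := id) (fun X hX => by
      simp only [Function.comp_apply, Submodule.map_comap_subtype, id_eq]
      exact inf_eq_right.2 (hle X (by simpa using hX)))]
    exact Finset.image_id
  · -- right inverse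
    rintro ⟨s', hs'⟩
    apply Subtype.ext
    show (s'.image (Submodule.map U.1.subtype)).image (Submodule.comap U.1.subtype) = s'
    rw [Finset.image_image]
    rw [Finset.image_congr (g := id) (fun X hX => by
      simp only [Function.comp_apply, id_eq]
      exact Submodule.comap_map_eq_of_injective (Submodule.injective_subtype U.1) X)]
    exact Finset.image_id

lemma card_lineSets_mul (d : ℕ) :
    Nat.card {s : Finset (Submodule F V) //
        s.card = d ∧ (∀ U ∈ s, finrank F ↥U = 1) ∧ finrank F ↥(s.sup id) = d} *
      (d.factorial * (Fintype.card F - 1) ^ d) =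
    ∏ i ∈ Finset.range d, (Fintype.card F ^ finrank F V - Fintype.card F ^ i) := by
  rw [← card_indep_tuples d, card_indep_eq_ordered d, card_ordered_eq_sets d]
  ring

end

section
variable {F M : Type*} [Field F] [Fintype F] [AddCommGroup M] [Module F M] [Finite M]

lemma card_quotient_transport (W : Submodule F M) (m t : ℕ) (ht : 1 ≤ t)
    (hW : finrank F ↥W = t - 1) :
    Nat.card {s : Finset (Submodule F M) // s.card = m + 1 ∧
        (∀ V ∈ s, finrank F ↥V = t ∧ W ≤ V) ∧ finrank F ↥(s.sup id) = m + t} =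
      Nat.card {s : Finset (Submodule F (M ⧸ W)) // s.card = m + 1 ∧
        (∀ X ∈ s, finrank F ↥X = 1) ∧ finrank F ↥(s.sup id) = m + 1} := by
  classical
  have hFD : FiniteDimensional F M := Module.finite_iff_finite.mpr inferInstance
  have keyrank : ∀ (V : Submodule F M), W ≤ V →
      finrank F ↥(Submodule.map W.mkQ V) + finrank F ↥W = finrank F ↥V := by
    intro V hWV
    have h := LinearMap.finrank_range_add_finrank_ker (W.mkQ ∘ₗ V.subtype)
    rw [LinearMap.range_comp, Submodule.range_subtype, LinearMap.ker_comp,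
      Submodule.ker_mkQ, (Submodule.comapSubtypeEquivOfLe hWV).finrank_eq] at h
    exact h
  have gmap : ∀ X : Submodule F (M ⧸ W), Submodule.map W.mkQ (Submodule.comap W.mkQ X) = X := by
    intro X
    rw [Submodule.map_comap_eq, Submodule.range_mkQ, top_inf_eq]
  have hWle' : ∀ X : Submodule F (M ⧸ W), W ≤ Submodule.comap W.mkQ X := by
    intro X x hx
    have h0 : W.mkQ x = 0 := (Submodule.Quotient.mk_eq_zero W).2 hx
    show W.mkQ x ∈ X
    rw [h0]; exact X.zero_mem
  apply Nat.card_congr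
  refine ⟨fun a => ⟨a.1.image (Submodule.map W.mkQ), ?_⟩,
    fun s' => ⟨s'.1.image (Submodule.comap W.mkQ), ?_⟩, ?_, ?_⟩
  · -- forward conditions
    have hWle : ∀ V ∈ a.1, W ≤ V := fun V hV => (a.2.2.1 V hV).2
    have hmc : ∀ V ∈ a.1, Submodule.comap W.mkQ (Submodule.map W.mkQ V) = V := fun V hV => by
      rw [Submodule.comap_map_mkQ]; exact sup_eq_right.2 (hWle V hV)
    have hinj : Set.InjOn (Submodule.map W.mkQ) a.1 := fun X hX Y hY h => by
      rw [← hmc X hX, ← hmc Y hY, h]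
    have hne : ∃ V, V ∈ a.1 := Finset.card_pos.1 (by rw [a.2.1]; omega) |>.imp fun V h => h
    obtain ⟨V₀, hV₀⟩ := hne
    have hWsup : W ≤ a.1.sup id :=
      le_trans (hWle V₀ hV₀) (Finset.le_sup (f := id) hV₀)
    refine ⟨?_, ?_, ?_⟩
    · rw [Finset.card_image_of_injOn hinj, a.2.1]
    · intro Y hY
      obtain ⟨V, hV, rfl⟩ := Finset.mem_image.1 hY
      have := keyrank V (hWle V hV)
      rw [hW, (a.2.2.1 V hV).1] at this
      omega
    · have hs : (a.1.image (Submodule.map W.mkQ)).sup id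
          = Submodule.map W.mkQ (a.1.sup id) := by
        rw [Finset.sup_image]
        simp only [Function.id_comp]
        rw [← mapFinsetSupAux]
      rw [hs]
      have := keyrank (a.1.sup id) hWsup
      rw [hW, a.2.2.2] at this
      omega
  · -- inverse conditions
    have hinj : Function.Injective (Submodule.comap W.mkQ) := fun X Y h => by
      rw [← gmap X, h, gmap]
    have hne : ∃ X, X ∈ s'.1 := Finset.card_pos.1 (by rw [s'.2.1]; omega) |>.imp fun X h => h
    obtain ⟨X₀, hX₀⟩ := hne
    have hWsup : W ≤ (s'.1.image (Submodule.comap W.mkQ)).sup id :=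
      le_trans (hWle' X₀) (Finset.le_sup (f := id) (Finset.mem_image_of_mem _ hX₀))
    refine ⟨?_, ?_, ?_⟩
    · rw [Finset.card_image_of_injective _ hinj, s'.2.1]
    · intro V hV
      obtain ⟨X, hX, rfl⟩ := Finset.mem_image.1 hV
      refine ⟨?_, hWle' X⟩
      have := keyrank (Submodule.comap W.mkQ X) (hWle' X)
      rw [hW, gmap X, s'.2.2.1 X hX] at this
      omega
    · have hs : Submodule.map W.mkQ ((s'.1.image (Submodule.comap W.mkQ)).sup id)
          = s'.1.sup id := by
        rw [mapFinsetSupAux, Finset.sup_image]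
        have : ∀ X ∈ s'.1, (Submodule.map W.mkQ ∘ Submodule.comap W.mkQ) X = id X := fun X _ =>
          gmap X
        rw [Finset.sup_congr rfl this]
      have := keyrank _ hWsup
      rw [hW, hs, s'.2.2.2] at this
      omega
  · -- left inverse
    rintro ⟨s, hs⟩
    have hWle : ∀ V ∈ s, W ≤ V := fun V hV => (hs.2.1 V hV).2
    apply Subtype.ext
    show (s.image (Submodule.map W.mkQ)).image (Submodule.comap W.mkQ) = s
    rw [Finset.image_image]
    rw [Finset.image_congr (g := id) (fun V hV => by
      simp only [Function.comp_apply, Submodule.comap_map_mkQ, id_eq]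
      exact sup_eq_right.2 (hWle V (by simpa using hV)))]
    exact Finset.image_id
  · -- right inverse
    rintro ⟨s', hs'⟩
    apply Subtype.ext
    show (s'.image (Submodule.comap W.mkQ)).image (Submodule.map W.mkQ) = s'
    rw [Finset.image_image]
    rw [Finset.image_congr (g := id) (fun X hX => by
      simp only [Function.comp_apply, id_eq]
      exact gmap X)]
    exact Finset.image_id

end


/-- The Gaussian (q-)binomial coefficient as an exact quotient of products. -/
def gbinom (q a b : ℕ) : ℕ :=
  (∏ i ∈ Finset.range b, (q ^ (a - i) - 1)) / (∏ i ∈ Finset.range b, (q ^ (b - i) - 1))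

/-- Let `W` be a fixed `(t-1)`-dimensional subspace of `𝔽_q^k`, with
`m + t ≤ k`. The number of unordered `(m+1)`-element sets `{V₁, …, V_{m+1}}` of
`t`-dimensional subspaces, each containing `W`, whose sum is an `(m+t)`-dimensional
subspace, equals `[k-t+1 choose m+1]_q · ∏_{i=0}^{m}(q^{m+1} - q^i) / ((m+1)! (q-1)^{m+1})`. -/

theorem stmt_6 (q k m t : ℕ) (hq : IsPrimePow q) (hm : 1 ≤ m) (ht : 1 ≤ t)
    (hmt : m + t ≤ k)
    (F : Type) [Field F] [Fintype F] (hF : Fintype.card F = q)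
    (W : Submodule F (Fin k → F)) (hW : Module.finrank F W = t - 1) :
    Nat.card {s : Finset (Submodule F (Fin k → F)) //
        s.card = m + 1 ∧ (∀ V ∈ s, Module.finrank F V = t ∧ W ≤ V) ∧
        Module.finrank F ↥(s.sup id) = m + t} =
      gbinom q (k - t + 1) (m + 1) *
        ((∏ i ∈ Finset.range (m + 1), (q ^ (m + 1) - q ^ i)) /
          (Nat.factorial (m + 1) * (q - 1) ^ (m + 1))) := by
  classical
  have hq2 : 2 ≤ q := hq.two_le
  set d := m + 1 with hd
  have hFDM : FiniteDimensional F (Fin k → F) := Module.finite_iff_finite.mpr inferInstance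
  have hkM : finrank F (Fin k → F) = k := Module.finrank_fin_fun F
  set n := k - t + 1 with hn
  have htk : t ≤ k := by omega
  have hnQ : finrank F ((Fin k → F) ⧸ W) = n := by
    have h2 := Submodule.finrank_quotient_add_finrank W
    rw [hkM, hW] at h2
    omega
  have hdn : d ≤ n := by omega
  -- abbreviations
  set B := d.factorial * (q - 1) ^ d with hB
  have hBpos : 0 < B := by
    apply Nat.mul_pos (Nat.factorial_pos d)
    exact pow_pos (by omega) d
  set Ad := ∏ i ∈ Finset.range d, (q ^ d - q ^ i) with hAd
  set An := ∏ i ∈ Finset.range d, (q ^ n - q ^ i) with hAn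
  -- step 1 : transport to the quotient
  rw [card_quotient_transport W m t ht hW]
  -- the main counting identity, on any space
  have main : ∀ (V : Type) [AddCommGroup V] [Module F V] [Finite V],
      Nat.card {s : Finset (Submodule F V) //
        s.card = d ∧ (∀ U ∈ s, finrank F ↥U = 1) ∧ finrank F ↥(s.sup id) = d} * B =
      ∏ i ∈ Finset.range d, (q ^ finrank F V - q ^ i) := by
    intro V _ _ _
    have := card_lineSets_mul (F := F) (V := V) d
    rwa [hF] at this
  -- instance of it on a model space of dimension d
  have hFd : finrank F (Fin d → F) = d := Module.finrank_fin_fun F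
  have hD : Nat.card {s : Finset (Submodule F (Fin d → F)) //
        s.card = d ∧ (∀ U ∈ s, finrank F ↥U = 1) ∧ finrank F ↥(s.sup id) = d} * B = Ad := by
    rw [main (Fin d → F), hFd]
  have hBdvd : B ∣ Ad := Dvd.intro_left _ hD
  -- count on Q
  set N := Nat.card {s : Finset (Submodule F ((Fin k → F) ⧸ W)) //
        s.card = d ∧ (∀ U ∈ s, finrank F ↥U = 1) ∧ finrank F ↥(s.sup id) = d} with hN
  have hQmul : N * B = An := by rw [hN, main ((Fin k → F) ⧸ W), hnQ]
  -- the fibering over the sup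
  set G := Nat.card {U : Submodule F ((Fin k → F) ⧸ W) // finrank F ↥U = d} with hG
  have hfiber : N = G * (Ad / B) := by
    rw [hN, hG]
    apply card_lineSets_fiber d (Ad / B)
    intro U hU
    have h1 := main ↥U
    rw [hU] at h1
    rw [← hAd] at h1
    rw [← h1, Nat.mul_div_cancel _ hBpos]
  -- deduce G * Ad = An
  have hGAd : G * Ad = An := by
    rw [← hQmul, hfiber, mul_assoc, Nat.div_mul_cancel hBdvd]
  -- factor out powers of q
  set c := ∏ i ∈ Finset.range d, q ^ i with hc
  have hcpos : 0 < c := Finset.prod_pos (fun i _ => pow_pos (by omega) i)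
  set ad := ∏ i ∈ Finset.range d, (q ^ (d - i) - 1) with had
  set an := ∏ i ∈ Finset.range d, (q ^ (n - i) - 1) with han
  have hfact : ∀ (r : ℕ), d ≤ r → (∏ i ∈ Finset.range d, (q ^ r - q ^ i)) =
      c * (∏ i ∈ Finset.range d, (q ^ (r - i) - 1)) := by
    intro r hr
    rw [hc, ← Finset.prod_mul_distrib]
    apply Finset.prod_congr rfl
    intro i hi
    have hir : i ≤ r := by
      have := Finset.mem_range.1 hi; omega
    rw [Nat.mul_sub, mul_one, ← pow_add]
    congr 2
    omega
  have hAdc : Ad = c * ad := hfact d le_rfl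
  have hAnc : An = c * an := hfact n hdn
  have hadpos : 0 < ad := by
    apply Finset.prod_pos
    intro i hi
    have hid : i < d := Finset.mem_range.1 hi
    have : 2 ≤ q ^ (d - i) := le_trans hq2 (Nat.le_self_pow (by omega) q)
    omega
  have hGad : G * ad = an := by
    have : c * (G * ad) = c * an := by
      rw [← hAnc, ← hGAd, hAdc]; ring
    exact Nat.eq_of_mul_eq_mul_left hcpos this
  have hgb : gbinom q n d = G := by
    rw [gbinom, ← han, ← had, ← hGad, Nat.mul_div_cancel _ hadpos]
  rw [hfiber, hgb]
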